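/- Fix positive integers n, d and let J_{nd} be the nd×nd symmetric matrix whose d×d diagonal blocks equal (n−1)I_d and whose off-diagonal blocks equal −I_d. Let X_1, …, X_n be d×d real symmetric matrices such that the block diagonal matrix diag(X_1, …, X_n) ≤ J_{nd} in the Loewner order. Then for each γ ∈ (0, 1/n): each I_d − γX_i is invertible; the matrices X_i^γ := X_i(I_d − γX_i)^{-1} satisfy X_i^γ ≥ X_i for i = 1, …, n; and −(1/γ) I_{nd} ≤ diag(X_1^γ, …, X_n^γ) ≤ (1/(1 − nγ)) J_{nd}. -/

import Mathlib

open Matrix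

/-- The `nd × nd` matrix `J_{nd}` with `n × n` block structure of `d × d` blocks:
diagonal blocks `(n−1)I_d`, off-diagonal blocks `−I_d`. -/
def Jmat (n d : ℕ) : Matrix (Fin n × Fin d) (Fin n × Fin d) ℝ :=
  Matrix.of fun p q => if p.2 = q.2 then (if p.1 = q.1 then (n : ℝ) - 1 else -1) else 0

/-- The `nd × nd` block diagonal matrix `diag(X_1, …, X_n)`. -/
def blockDiag {n d : ℕ} (X : Fin n → Matrix (Fin d) (Fin d) ℝ) :
    Matrix (Fin n × Fin d) (Fin n × Fin d) ℝ :=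
  Matrix.of fun p q => if p.1 = q.1 then X p.1 p.2 q.2 else 0

section Helpers

variable {m : Type*} [Fintype m] [DecidableEq m]

lemma psd_smul {c : ℝ} {M : Matrix m m ℝ} (hc : 0 ≤ c) (hM : M.PosSemidef) :
    (c • M).PosSemidef := by
  rw [posSemidef_iff_dotProduct_mulVec]
  constructor
  · show _ = _; rw [conjTranspose_smul, hM.1.eq, star_trivial]
  · intro x
    rw [smul_mulVec, dotProduct_smul, smul_eq_mul]
    exact mul_nonneg hc (hM.dotProduct_mulVec_nonneg x)

lemma pd_smul_one {c : ℝ} (hc : 0 < c) : (c • (1 : Matrix m m ℝ)).PosDef := by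
  rw [smul_one_eq_diagonal]
  exact Matrix.posDef_diagonal_iff.mpr fun _ => hc

lemma inv_antitone {P Q : Matrix m m ℝ} (hP : P.PosDef) (hPQ : (Q - P).PosSemidef) :
    (P⁻¹ - Q⁻¹).PosSemidef := by
  have hQ : Q.PosDef := by
    have := hP.add_posSemidef hPQ
    simpa using this
  have hPd : IsUnit P.det := (Matrix.isUnit_iff_isUnit_det _).mp hP.isUnit
  have hQd : IsUnit Q.det := (Matrix.isUnit_iff_isUnit_det _).mp hQ.isUnit
  have key : P⁻¹ - Q⁻¹ = Q⁻¹ᴴ * (Q - P) * Q⁻¹ + ((Q - P) * Q⁻¹)ᴴ * P⁻¹ * ((Q - P) * Q⁻¹) := by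
    have hQsym : Q⁻¹ᴴ = Q⁻¹ := hQ.inv.isHermitian
    have hDsym : (Q - P)ᴴ = Q - P := hPQ.isHermitian
    rw [conjTranspose_mul, hQsym, hDsym]
    simp only [sub_mul, mul_sub, Matrix.mul_assoc,
      Matrix.nonsing_inv_mul_cancel_left _ _ hQd, Matrix.mul_nonsing_inv_cancel_left _ _ hQd,
      Matrix.nonsing_inv_mul_cancel_left _ _ hPd, Matrix.mul_nonsing_inv_cancel_left _ _ hPd,
      Matrix.mul_nonsing_inv _ hQd, Matrix.nonsing_inv_mul _ hQd,
      Matrix.mul_nonsing_inv _ hPd, Matrix.nonsing_inv_mul _ hPd, Matrix.mul_one, Matrix.one_mul]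
    abel
  rw [key]
  exact (hPQ.conjTranspose_mul_mul_same Q⁻¹).add (hP.inv.posSemidef.conjTranspose_mul_mul_same _)

end Helpers

section BlockDiag

variable {n d : ℕ}

lemma bd_apply (X : Fin n → Matrix (Fin d) (Fin d) ℝ) (p q : Fin n × Fin d) :
    _root_.blockDiag X p q = if p.1 = q.1 then X p.1 p.2 q.2 else 0 := rfl

lemma bd_add (X Y : Fin n → Matrix (Fin d) (Fin d) ℝ) :
    _root_.blockDiag X + _root_.blockDiag Y = _root_.blockDiag (fun i => X i + Y i) := by
  ext ⟨i, k⟩ ⟨j, l⟩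
  simp only [Matrix.add_apply, bd_apply]
  split <;> simp

lemma bd_sub (X Y : Fin n → Matrix (Fin d) (Fin d) ℝ) :
    _root_.blockDiag X - _root_.blockDiag Y = _root_.blockDiag (fun i => X i - Y i) := by
  ext ⟨i, k⟩ ⟨j, l⟩
  simp only [Matrix.sub_apply, bd_apply]
  split <;> simp

lemma bd_smul (c : ℝ) (X : Fin n → Matrix (Fin d) (Fin d) ℝ) :
    c • _root_.blockDiag X = _root_.blockDiag (fun i => c • X i) := by
  ext ⟨i, k⟩ ⟨j, l⟩
  simp only [Matrix.smul_apply, bd_apply]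
  split <;> simp

lemma bd_one : (1 : Matrix (Fin n × Fin d) (Fin n × Fin d) ℝ) = _root_.blockDiag (fun _ => 1) := by
  ext ⟨i, k⟩ ⟨j, l⟩
  simp only [Matrix.one_apply, bd_apply, Prod.mk.injEq]
  by_cases h : i = j <;> by_cases h2 : k = l <;> simp [h, h2, Matrix.one_apply]

lemma bd_mul (X Y : Fin n → Matrix (Fin d) (Fin d) ℝ) :
    _root_.blockDiag X * _root_.blockDiag Y = _root_.blockDiag (fun i => X i * Y i) := by
  ext ⟨i, k⟩ ⟨j, l⟩
  simp only [Matrix.mul_apply, bd_apply, Fintype.sum_prod_type]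
  by_cases h : i = j
  · subst h
    simp [Finset.sum_ite_eq, ite_mul, mul_ite]
  · simp [ite_mul, mul_ite, h]

lemma bd_psd {M : Fin n → Matrix (Fin d) (Fin d) ℝ} (hM : ∀ i, (M i).PosSemidef) :
    (_root_.blockDiag M).PosSemidef := by
  rw [posSemidef_iff_dotProduct_mulVec]
  constructor
  · show _ = _
    ext ⟨i, k⟩ ⟨j, l⟩
    simp only [conjTranspose_apply, bd_apply, star_trivial]
    by_cases h : i = j
    · subst h; simpa using (hM i).1.apply k l
    · simp [h, Ne.symm h]
  · intro x
    have key : star x ⬝ᵥ (_root_.blockDiag M *ᵥ x)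
        = ∑ i, star (fun k => x (i, k)) ⬝ᵥ (M i *ᵥ fun k => x (i, k)) := by
      simp [dotProduct, mulVec, bd_apply, Fintype.sum_prod_type, ite_mul, mul_ite,
        Finset.mul_sum]
    rw [key]
    exact Finset.sum_nonneg fun i _ => (hM i).dotProduct_mulVec_nonneg _

end BlockDiag

section JE

variable {n d : ℕ}

/-- The all-ones-block matrix `E = 1_n 1_nᵀ ⊗ I_d`. -/
def Emat (n d : ℕ) : Matrix (Fin n × Fin d) (Fin n × Fin d) ℝ :=
  Matrix.of fun p q => if p.2 = q.2 then 1 else 0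

lemma J_eq : Jmat n d = (n : ℝ) • 1 - Emat n d := by
  ext ⟨i, k⟩ ⟨j, l⟩
  simp only [Jmat, Emat, Matrix.sub_apply, Matrix.smul_apply, Matrix.one_apply, of_apply,
    Prod.mk.injEq, smul_eq_mul]
  by_cases h : k = l <;> by_cases h2 : i = j <;> simp [h, h2]

lemma E_psd : (Emat n d).PosSemidef := by
  rw [posSemidef_iff_dotProduct_mulVec]
  constructor
  · show _ = _
    ext ⟨i, k⟩ ⟨j, l⟩
    simp only [Emat, conjTranspose_apply, of_apply, star_trivial]
    by_cases h : k = l <;> simp [h, eq_comm]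
  · intro x
    have key : star x ⬝ᵥ (Emat n d *ᵥ x) = ∑ k, (∑ i, x (i, k)) * (∑ i, x (i, k)) := by
      simp only [dotProduct, mulVec, Emat, of_apply, Fintype.sum_prod_type, star_trivial,
        ite_mul, one_mul, zero_mul, Finset.sum_ite_eq, Finset.mem_univ, if_true,
        Pi.star_apply]
      rw [Finset.sum_comm]
      exact Finset.sum_congr rfl fun k _ => (Finset.sum_mul _ _ _).symm
    rw [key]
    exact Finset.sum_nonneg fun k _ => mul_self_nonneg _

lemma E_mul_E : Emat n d * Emat n d = (n : ℝ) • Emat n d := by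
  ext ⟨i, k⟩ ⟨j, l⟩
  simp only [Emat, Matrix.mul_apply, of_apply, Fintype.sum_prod_type, Matrix.smul_apply,
    ite_mul, one_mul, zero_mul, mul_ite, mul_one, mul_zero, smul_eq_mul]
  by_cases h : k = l <;> simp [h, Finset.sum_ite_eq]

lemma J_mul_J : Jmat n d * Jmat n d = (n : ℝ) • Jmat n d := by
  rw [J_eq]
  simp only [sub_mul, mul_sub, smul_mul_assoc, mul_smul_comm, Matrix.one_mul, Matrix.mul_one,
    E_mul_E, smul_smul, smul_sub]
  module

end JE

/-- If `diag(X_1, …, X_n) ≤ J_{nd}` in the Loewner order, then for `γ ∈ (0, 1/n)`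
each `I − γX_i` is invertible, `X_i^γ := X_i(I − γX_i)⁻¹ ≥ X_i`, and
`−(1/γ)I ≤ diag(X_1^γ, …, X_n^γ) ≤ (1/(1 − nγ)) J_{nd}`. -/
theorem stmt18 (n d : ℕ) (hn : 0 < n) (hd : 0 < d)
    (X : Fin n → Matrix (Fin d) (Fin d) ℝ) (hsymm : ∀ i, (X i).IsSymm)
    (hle : (Jmat n d - blockDiag X).PosSemidef)
    (γ : ℝ) (hγ0 : 0 < γ) (hγn : γ < 1 / (n : ℝ)) :
    (∀ i, IsUnit (1 - γ • X i)) ∧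
      (∀ i, (X i * (1 - γ • X i)⁻¹ - X i).PosSemidef) ∧
      (blockDiag (fun i => X i * (1 - γ • X i)⁻¹) + γ⁻¹ • 1).PosSemidef ∧
      ((1 / (1 - (n : ℝ) * γ)) • Jmat n d -
        blockDiag fun i => X i * (1 - γ • X i)⁻¹).PosSemidef := by
  have hn1 : (1 : ℝ) ≤ (n : ℝ) := by exact_mod_cast hn
  have hnpos : (0 : ℝ) < (n : ℝ) := by linarith
  have hγn' : (n : ℝ) * γ < 1 := by
    rw [lt_div_iff₀ hnpos] at hγn
    linarith
  have h1nγ : (0 : ℝ) < 1 - (n : ℝ) * γ := by linarith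
  -- per-block bound X_i ≤ (n-1) I
  have hXb : ∀ i, (((n : ℝ) - 1) • (1 : Matrix (Fin d) (Fin d) ℝ) - X i).PosSemidef := by
    intro i
    have h := hle.submatrix (fun k : Fin d => (i, k))
    have heq : (Jmat n d - blockDiag X).submatrix (fun k : Fin d => (i, k)) (fun k => (i, k))
        = ((n : ℝ) - 1) • 1 - X i := by
      ext k l
      simp only [Matrix.submatrix_apply, Matrix.sub_apply, Jmat, bd_apply, of_apply,
        Matrix.smul_apply, Matrix.one_apply, smul_eq_mul]
      by_cases h2 : k = l <;> simp [h2]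
    rwa [heq] at h
  -- positive definiteness of 1 - γ X_i
  have hpd : ∀ i, (1 - γ • X i).PosDef := by
    intro i
    have hpos : (0 : ℝ) < 1 - γ * ((n : ℝ) - 1) := by nlinarith
    have h1 := pd_smul_one (m := Fin d) hpos
    have h2 := psd_smul hγ0.le (hXb i)
    have h3 := h1.add_posSemidef h2
    have he : (1 - γ * ((n : ℝ) - 1)) • (1 : Matrix (Fin d) (Fin d) ℝ)
        + γ • (((n : ℝ) - 1) • 1 - X i) = 1 - γ • X i := by
      rw [smul_sub, smul_smul]
      module
    rwa [he] at h3
  have hdet : ∀ i, IsUnit (1 - γ • X i).det :=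
    fun i => (Matrix.isUnit_iff_isUnit_det _).mp (hpd i).isUnit
  -- commutation
  have hcomm : ∀ i, X i * (1 - γ • X i)⁻¹ = (1 - γ • X i)⁻¹ * X i := by
    intro i
    have hc : (1 - γ • X i) * X i = X i * (1 - γ • X i) := by
      simp only [mul_sub, sub_mul, Matrix.mul_one, Matrix.one_mul, mul_smul_comm,
        smul_mul_assoc]
    calc X i * (1 - γ • X i)⁻¹
        = (1 - γ • X i)⁻¹ * ((1 - γ • X i) * (X i * (1 - γ • X i)⁻¹)) := by
          rw [Matrix.nonsing_inv_mul_cancel_left _ _ (hdet i)]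
      _ = (1 - γ • X i)⁻¹ * (X i * ((1 - γ • X i) * (1 - γ • X i)⁻¹)) :=
          congrArg ((1 - γ • X i)⁻¹ * ·)
            (by rw [← Matrix.mul_assoc, hc, Matrix.mul_assoc])
      _ = (1 - γ • X i)⁻¹ * X i := by
          rw [Matrix.mul_nonsing_inv _ (hdet i), Matrix.mul_one]
  -- the basic resolvent identity  γ (X B⁻¹) + 1 = B⁻¹
  have hres : ∀ i, γ • (X i * (1 - γ • X i)⁻¹) + 1 = (1 - γ • X i)⁻¹ := by
    intro i
    have h1 : γ • (X i * (1 - γ • X i)⁻¹) + 1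
        = γ • (X i * (1 - γ • X i)⁻¹) + (1 - γ • X i) * (1 - γ • X i)⁻¹ := by
      rw [Matrix.mul_nonsing_inv _ (hdet i)]
    rw [h1]
    simp only [sub_mul, Matrix.one_mul, smul_mul_assoc]
    abel
  -- part 1
  refine ⟨fun i => (hpd i).isUnit, ?_, ?_, ?_⟩
  -- part 2
  · intro i
    have hXH : (X i)ᴴ = X i := by
      exact (conjTranspose_eq_transpose_of_trivial _).trans (hsymm i)
    have e1 : X i - X i * (1 - γ • X i) = γ • (X i * X i) := by
      rw [mul_sub, Matrix.mul_one, mul_smul_comm]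
      abel
    have key : X i * (1 - γ • X i)⁻¹ - X i = (X i)ᴴ * (γ • (1 - γ • X i)⁻¹) * X i := by
      rw [hXH]
      calc X i * (1 - γ • X i)⁻¹ - X i
          = X i * (1 - γ • X i)⁻¹ - X i * (1 - γ • X i) * (1 - γ • X i)⁻¹ := by
            rw [Matrix.mul_nonsing_inv_cancel_right _ _ (hdet i)]
        _ = (X i - X i * (1 - γ • X i)) * (1 - γ • X i)⁻¹ := by
            rw [sub_mul]
        _ = (γ • (X i * X i)) * (1 - γ • X i)⁻¹ := by rw [e1]
        _ = X i * (γ • (1 - γ • X i)⁻¹) * X i := by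
            simp only [smul_mul_assoc, mul_smul_comm]
            congr 1
            calc X i * X i * (1 - γ • X i)⁻¹
                = X i * (X i * (1 - γ • X i)⁻¹) := Matrix.mul_assoc _ _ _
              _ = X i * ((1 - γ • X i)⁻¹ * X i) := by rw [hcomm i]
              _ = X i * (1 - γ • X i)⁻¹ * X i := by rw [← Matrix.mul_assoc]
    rw [key]
    exact (psd_smul hγ0.le (hpd i).inv.posSemidef).conjTranspose_mul_mul_same (X i)
  -- part 3
  · have hblocks : blockDiag (fun i => X i * (1 - γ • X i)⁻¹) + γ⁻¹ • 1
        = blockDiag (fun i => γ⁻¹ • (1 - γ • X i)⁻¹) := by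
      rw [bd_one (n := n) (d := d), bd_smul, bd_add]
      refine congrArg _ (funext fun i => ?_)
      calc X i * (1 - γ • X i)⁻¹ + γ⁻¹ • 1
          = γ⁻¹ • (γ • (X i * (1 - γ • X i)⁻¹) + 1) := by
            rw [smul_add, smul_smul, inv_mul_cancel₀ hγ0.ne', one_smul]
        _ = γ⁻¹ • (1 - γ • X i)⁻¹ := by rw [hres i]
    rw [hblocks]
    exact bd_psd fun i => psd_smul (inv_nonneg.mpr hγ0.le) (hpd i).inv.posSemidef
  -- part 4
  · set c : ℝ := γ / (1 - (n : ℝ) * γ) with hcdef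
    have hPinv : (1 - γ • Jmat n d)⁻¹ = 1 + c • Jmat n d := by
      apply Matrix.inv_eq_right_inv
      have expand : (1 - γ • Jmat n d) * (1 + c • Jmat n d)
          = 1 + (c - γ - γ * (c * (n : ℝ))) • Jmat n d := by
        simp only [sub_mul, mul_add, Matrix.mul_one, Matrix.one_mul, smul_mul_assoc,
          mul_smul_comm, J_mul_J, smul_smul]
        module
      rw [expand]
      have hc0 : c - γ - γ * (c * (n : ℝ)) = 0 := by
        rw [hcdef, div_eq_mul_inv]
        have := mul_inv_cancel₀ h1nγ.ne'
        linear_combination γ * this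
      rw [hc0, zero_smul, add_zero]
    have hPpd : (1 - γ • Jmat n d).PosDef := by
      have heq : (1 : Matrix (Fin n × Fin d) (Fin n × Fin d) ℝ) - γ • Jmat n d
          = (1 - (n : ℝ) * γ) • 1 + γ • Emat n d := by
        rw [J_eq, smul_sub, smul_smul]
        module
      rw [heq]
      exact (pd_smul_one h1nγ).add_posSemidef (psd_smul hγ0.le E_psd)
    have hQP : ((1 - γ • blockDiag X) - (1 - γ • Jmat n d)).PosSemidef := by
      have heq : (1 - γ • blockDiag X) - (1 - γ • Jmat n d) = γ • (Jmat n d - blockDiag X) := by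
        module
      rw [heq]
      exact psd_smul hγ0.le hle
    have hmono := inv_antitone hPpd hQP
    have hQinv : (1 - γ • blockDiag X)⁻¹ = blockDiag (fun i => (1 - γ • X i)⁻¹) := by
      have hQblock : (1 : Matrix (Fin n × Fin d) (Fin n × Fin d) ℝ) - γ • blockDiag X
          = blockDiag (fun i => 1 - γ • X i) := by
        rw [bd_one (n := n) (d := d), bd_smul, bd_sub]
      rw [hQblock]
      apply Matrix.inv_eq_right_inv
      rw [bd_mul]
      have : (fun i => (1 - γ • X i) * (1 - γ • X i)⁻¹)
          = fun _ : Fin n => (1 : Matrix (Fin d) (Fin d) ℝ) :=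
        funext fun i => Matrix.mul_nonsing_inv _ (hdet i)
      rw [this, ← bd_one]
    have hbd : blockDiag (fun i => (1 - γ • X i)⁻¹)
        = γ • blockDiag (fun i => X i * (1 - γ • X i)⁻¹) + 1 := by
      rw [bd_smul, bd_one (n := n) (d := d), bd_add]
      exact congrArg _ (funext fun i => (hres i).symm)
    have hfinal : (1 / (1 - (n : ℝ) * γ)) • Jmat n d
          - blockDiag (fun i => X i * (1 - γ • X i)⁻¹)
        = γ⁻¹ • ((1 - γ • Jmat n d)⁻¹ - (1 - γ • blockDiag X)⁻¹) := by
      rw [hPinv, hQinv, hbd]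
      match_scalars <;> field_simp [hcdef]
      · rw [hcdef, mul_div_assoc', eq_div_iff h1nγ.ne']
        ring
      · ring
    rw [hfinal]
    exact psd_smul (inv_nonneg.mpr hγ0.le) hmono
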